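/- Let w, w′ ∈ 𝕎 with w₁₃ ≠ 0 and w′₁₃ ≠ 0. Then w and w′ lie in the same G-orbit (i.e., there exists (ν₁, ν₂) ∈ G with w′ = ν₂ w ν₁⁻¹) if and only if Δ(w) and Δ(w′) lie in the same GL₂(ℂ) × GL₂(ℂ)-orbit, i.e., there exist A, B ∈ GL₂(ℂ) with Δ(w′) = B · Δ(w) · A⁻¹. -/

import Mathlib

open MvPolynomial Matrix

noncomputable section

/-- The polynomial ring `R = ℂ[x₀,x₁,x₂]`. -/
abbrev Rp : Type := MvPolynomial (Fin 3) ℂ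

/-- `p` is a linear form. -/
def IsLin (p : Rp) : Prop := p.IsHomogeneous 1

/-- `p` is a quadratic form. -/
def IsQuad (p : Rp) : Prop := p.IsHomogeneous 2

/-- Membership in `𝕎` : entries `w₁₁, w₁₂, w₂₃, w₃₃` linear, `w₁₃` a constant,
`w₂₁, w₂₂, w₃₁, w₃₂` quadratic. -/
def Wmat (w : Matrix (Fin 3) (Fin 3) Rp) : Prop :=
  IsLin (w 0 0) ∧ IsLin (w 0 1) ∧ IsLin (w 1 2) ∧ IsLin (w 2 2) ∧
  (∃ c : ℂ, w 0 2 = C c) ∧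
  IsQuad (w 1 0) ∧ IsQuad (w 1 1) ∧ IsQuad (w 2 0) ∧ IsQuad (w 2 1)

/-- `Δ(w) = w₁₃·[[w₂₁, w₂₂],[w₃₁, w₃₂]] − [[w₂₃],[w₃₃]]·[w₁₁, w₁₂]`. -/
def Δ (w : Matrix (Fin 3) (Fin 3) Rp) : Matrix (Fin 2) (Fin 2) Rp :=
  !![w 0 2 * w 1 0 - w 1 2 * w 0 0, w 0 2 * w 1 1 - w 1 2 * w 0 1;
     w 0 2 * w 2 0 - w 2 2 * w 0 0, w 0 2 * w 2 1 - w 2 2 * w 0 1]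

/-- The matrix `ν₁ = [[A, 0],[φ, α]]`. -/
def nu1 (A : Matrix (Fin 2) (Fin 2) ℂ) (α : ℂ) (φ : Fin 2 → Rp) :
    Matrix (Fin 3) (Fin 3) Rp :=
  !![C (A 0 0), C (A 0 1), 0;
     C (A 1 0), C (A 1 1), 0;
     φ 0, φ 1, C α]

/-- The matrix `ν₂ = [[β, 0],[ψ, B]]`. -/
def nu2 (B : Matrix (Fin 2) (Fin 2) ℂ) (β : ℂ) (ψ : Fin 2 → Rp) :
    Matrix (Fin 3) (Fin 3) Rp :=
  !![C β, 0, 0;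
     ψ 0, C (B 0 0), C (B 0 1);
     ψ 1, C (B 1 0), C (B 1 1)]

/-! ### Auxiliary lemmas -/

private lemma mapC_mul (M N : Matrix (Fin 2) (Fin 2) ℂ) :
    (M * N).map (fun x => (C x : Rp)) = M.map (fun x => C x) * N.map (fun x => C x) := by
  ext i j; simp [Matrix.mul_apply, Matrix.map_apply, Fin.sum_univ_two]

private lemma mapC_one : (1 : Matrix (Fin 2) (Fin 2) ℂ).map (fun x => (C x : Rp)) = 1 := by
  ext i j; by_cases h : i = j <;> simp [Matrix.one_apply, h]

private lemma isLin_CMul (a : ℂ) {p : Rp} (h : IsLin p) : IsLin (C a * p) := by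
  simpa [IsLin] using (MvPolynomial.isHomogeneous_C (Fin 3) a).mul h

private lemma isLin_mulC (a : ℂ) {p : Rp} (h : IsLin p) : IsLin (p * C a) := by
  rw [mul_comm]; exact isLin_CMul a h

private lemma det_nu1_isUnit (Av : Matrix (Fin 2) (Fin 2) ℂ) (α : ℂ) (φ : Fin 2 → Rp)
    (hα : α ≠ 0) (hA : Av.det ≠ 0) : IsUnit (nu1 Av α φ).det := by
  have h : (nu1 Av α φ).det = C (α * Av.det) := by
    simp [nu1, Matrix.det_fin_three, Matrix.det_fin_two, _root_.map_mul]
    ring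
  rw [h]
  exact (isUnit_iff_ne_zero.2 (mul_ne_zero hα hA)).map (C : ℂ →+* Rp)

private lemma gl_det_ne_zero (A : Matrix.GeneralLinearGroup (Fin 2) ℂ) :
    ((A : Matrix (Fin 2) (Fin 2) ℂ)).det ≠ 0 :=
  ((Matrix.isUnit_iff_isUnit_det _).1 A.isUnit).ne_zero

set_option maxHeartbeats 1000000 in
/-- for `w, w' ∈ 𝕎` with `w₁₃ ≠ 0 ≠ w'₁₃`, `w` and `w'` are in the same
`G`-orbit iff `Δ(w)` and `Δ(w')` are in the same `GL₂(ℂ) × GL₂(ℂ)`-orbit. -/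
theorem stmt2 (w w' : Matrix (Fin 3) (Fin 3) Rp) (hw : Wmat w) (hw' : Wmat w')
    (h13 : w 0 2 ≠ 0) (h13' : w' 0 2 ≠ 0) :
    (∃ (A B : Matrix.GeneralLinearGroup (Fin 2) ℂ) (α β : ℂˣ) (φ ψ : Fin 2 → Rp),
        (∀ i, IsLin (φ i)) ∧ (∀ i, IsLin (ψ i)) ∧
        w' = nu2 (B : Matrix (Fin 2) (Fin 2) ℂ) (β : ℂ) ψ * w *
          (nu1 (A : Matrix (Fin 2) (Fin 2) ℂ) (α : ℂ) φ)⁻¹) ↔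
    (∃ A B : Matrix.GeneralLinearGroup (Fin 2) ℂ,
        Δ w' = ((B : Matrix (Fin 2) (Fin 2) ℂ)).map (fun x => C x) * Δ w *
          ((A⁻¹ : Matrix.GeneralLinearGroup (Fin 2) ℂ) :
            Matrix (Fin 2) (Fin 2) ℂ).map (fun x => C x)) := by
  constructor
  · -- forward
    rintro ⟨A, B, α, β, φ, ψ, hφ, hψ, hEq⟩
    have hdet := det_nu1_isUnit (A : Matrix (Fin 2) (Fin 2) ℂ) (α : ℂ) φ α.ne_zero
      (gl_det_ne_zero A)
    have hE : w' * nu1 (A : Matrix (Fin 2) (Fin 2) ℂ) (α : ℂ) φ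
        = nu2 (B : Matrix (Fin 2) (Fin 2) ℂ) (β : ℂ) ψ * w := by
      rw [hEq, Matrix.mul_assoc, Matrix.nonsing_inv_mul _ hdet, Matrix.mul_one]
    have h := fun i j => Matrix.ext_iff.2 hE i j
    have e00 := h 0 0; have e01 := h 0 1; have e02 := h 0 2
    have e10 := h 1 0; have e11 := h 1 1; have e12 := h 1 2
    have e20 := h 2 0; have e21 := h 2 1; have e22 := h 2 2
    simp [nu1, nu2, Matrix.mul_apply, Fin.sum_univ_three]
      at e00 e01 e02 e10 e11 e12 e20 e21 e22
    have hCα : (C (α : ℂ) : Rp) ≠ 0 := by simpa using α.ne_zero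
    have hdA : (((α : ℂ)) • (A : Matrix (Fin 2) (Fin 2) ℂ)).det ≠ 0 := by
      rw [Matrix.det_smul]
      exact mul_ne_zero (pow_ne_zero _ α.ne_zero) (gl_det_ne_zero A)
    have hdB : (((β : ℂ)) • (B : Matrix (Fin 2) (Fin 2) ℂ)).det ≠ 0 := by
      rw [Matrix.det_smul]
      exact mul_ne_zero (pow_ne_zero _ β.ne_zero) (gl_det_ne_zero B)
    refine ⟨Matrix.GeneralLinearGroup.mkOfDetNeZero _ hdA,
      Matrix.GeneralLinearGroup.mkOfDetNeZero _ hdB, ?_⟩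
    set A' : Matrix.GeneralLinearGroup (Fin 2) ℂ := Matrix.GeneralLinearGroup.mkOfDetNeZero _ hdA
      with hA'
    set B' : Matrix.GeneralLinearGroup (Fin 2) ℂ := Matrix.GeneralLinearGroup.mkOfDetNeZero _ hdB
      with hB'
    have hA'c : (A' : Matrix (Fin 2) (Fin 2) ℂ) = ((α : ℂ)) • (A : Matrix (Fin 2) (Fin 2) ℂ) := rfl
    have hB'c : (B' : Matrix (Fin 2) (Fin 2) ℂ) = ((β : ℂ)) • (B : Matrix (Fin 2) (Fin 2) ℂ) := rfl
    have key : Δ w' * ((A' : Matrix (Fin 2) (Fin 2) ℂ)).map (fun x => (C x : Rp))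
        = ((B' : Matrix (Fin 2) (Fin 2) ℂ)).map (fun x => C x) * Δ w := by
      rw [hA'c, hB'c, ← Matrix.ext_iff]
      intro r j
      fin_cases r <;> fin_cases j
      · -- (0,0)
        simp [Δ, Matrix.mul_apply, Fin.sum_univ_two, Matrix.smul_apply, smul_eq_mul,
          _root_.map_mul]
        apply mul_left_cancel₀ hCα
        linear_combination (C (α:ℂ)^2 * w' 0 2) * e10 - (C (α:ℂ)^2 * w' 1 2) * e00
          + (C (α:ℂ) * ψ 0 * w 0 0 + C (α:ℂ) * (C ((B : Matrix (Fin 2) (Fin 2) ℂ) 0 0) * w 1 0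
              + C ((B : Matrix (Fin 2) (Fin 2) ℂ) 0 1) * w 2 0)) * e02
          - (C (α:ℂ) * C (β:ℂ) * w 0 0) * e12
      · -- (0,1)
        simp [Δ, Matrix.mul_apply, Fin.sum_univ_two, Matrix.smul_apply, smul_eq_mul,
          _root_.map_mul]
        apply mul_left_cancel₀ hCα
        linear_combination (C (α:ℂ)^2 * w' 0 2) * e11 - (C (α:ℂ)^2 * w' 1 2) * e01
          + (C (α:ℂ) * ψ 0 * w 0 1 + C (α:ℂ) * (C ((B : Matrix (Fin 2) (Fin 2) ℂ) 0 0) * w 1 1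
              + C ((B : Matrix (Fin 2) (Fin 2) ℂ) 0 1) * w 2 1)) * e02
          - (C (α:ℂ) * C (β:ℂ) * w 0 1) * e12
      · -- (1,0)
        simp [Δ, Matrix.mul_apply, Fin.sum_univ_two, Matrix.smul_apply, smul_eq_mul,
          _root_.map_mul]
        apply mul_left_cancel₀ hCα
        linear_combination (C (α:ℂ)^2 * w' 0 2) * e20 - (C (α:ℂ)^2 * w' 2 2) * e00
          + (C (α:ℂ) * ψ 1 * w 0 0 + C (α:ℂ) * (C ((B : Matrix (Fin 2) (Fin 2) ℂ) 1 0) * w 1 0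
              + C ((B : Matrix (Fin 2) (Fin 2) ℂ) 1 1) * w 2 0)) * e02
          - (C (α:ℂ) * C (β:ℂ) * w 0 0) * e22
      · -- (1,1)
        simp [Δ, Matrix.mul_apply, Fin.sum_univ_two, Matrix.smul_apply, smul_eq_mul,
          _root_.map_mul]
        apply mul_left_cancel₀ hCα
        linear_combination (C (α:ℂ)^2 * w' 0 2) * e21 - (C (α:ℂ)^2 * w' 2 2) * e01
          + (C (α:ℂ) * ψ 1 * w 0 1 + C (α:ℂ) * (C ((B : Matrix (Fin 2) (Fin 2) ℂ) 1 0) * w 1 1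
              + C ((B : Matrix (Fin 2) (Fin 2) ℂ) 1 1) * w 2 1)) * e02
          - (C (α:ℂ) * C (β:ℂ) * w 0 1) * e22
    calc Δ w' = Δ w' * 1 := (mul_one _).symm
      _ = Δ w' * (((A' : Matrix (Fin 2) (Fin 2) ℂ)).map (fun x => (C x : Rp)) *
            (((A'⁻¹ : Matrix.GeneralLinearGroup (Fin 2) ℂ) :
              Matrix (Fin 2) (Fin 2) ℂ)).map (fun x => C x)) := by
          rw [← mapC_mul, A'.mul_inv, mapC_one]
      _ = (Δ w' * ((A' : Matrix (Fin 2) (Fin 2) ℂ)).map (fun x => C x)) *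
            (((A'⁻¹ : Matrix.GeneralLinearGroup (Fin 2) ℂ) :
              Matrix (Fin 2) (Fin 2) ℂ)).map (fun x => C x) := by
          rw [Matrix.mul_assoc]
      _ = ((B' : Matrix (Fin 2) (Fin 2) ℂ)).map (fun x => C x) * Δ w *
            (((A'⁻¹ : Matrix.GeneralLinearGroup (Fin 2) ℂ) :
              Matrix (Fin 2) (Fin 2) ℂ)).map (fun x => C x) := by
          rw [key]
  · -- backward
    rintro ⟨A0, B0, hΔ0⟩
    obtain ⟨c, hc⟩ := hw.2.2.2.2.1
    obtain ⟨c', hc'⟩ := hw'.2.2.2.2.1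
    rw [hc] at h13; rw [hc'] at h13'
    have hcne : c ≠ 0 := by simpa using h13
    have hc'ne : c' ≠ 0 := by simpa using h13'
    have honec : (C c' * C (c'⁻¹) : Rp) = 1 := by
      rw [← MvPolynomial.C_mul, mul_inv_cancel₀ hc'ne, MvPolynomial.C_1]
    have hCc' : (C c' : Rp) ≠ 0 := by simpa using hc'ne
    have hΔ : Δ w' * ((A0 : Matrix (Fin 2) (Fin 2) ℂ)).map (fun x => (C x : Rp))
        = ((B0 : Matrix (Fin 2) (Fin 2) ℂ)).map (fun x => C x) * Δ w := by
      rw [hΔ0, Matrix.mul_assoc, Matrix.mul_assoc, ← mapC_mul, A0.inv_mul, mapC_one,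
        Matrix.mul_one]
    have hD := fun r j => Matrix.ext_iff.2 hΔ r j
    have d00 := hD 0 0; have d01 := hD 0 1; have d10 := hD 1 0; have d11 := hD 1 1
    simp [Δ, Matrix.mul_apply, Fin.sum_univ_two, hc, hc'] at d00
    simp [Δ, Matrix.mul_apply, Fin.sum_univ_two, hc, hc'] at d01
    simp [Δ, Matrix.mul_apply, Fin.sum_univ_two, hc, hc'] at d10
    simp [Δ, Matrix.mul_apply, Fin.sum_univ_two, hc, hc'] at d11
    have hdB : ((c * c'⁻¹) • (B0 : Matrix (Fin 2) (Fin 2) ℂ)).det ≠ 0 := by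
      rw [Matrix.det_smul]
      exact mul_ne_zero (pow_ne_zero _ (mul_ne_zero hcne (inv_ne_zero hc'ne)))
        (gl_det_ne_zero B0)
    refine ⟨A0, Matrix.GeneralLinearGroup.mkOfDetNeZero _ hdB, Units.mk0 c hcne,
      Units.mk0 c' hc'ne,
      ![w 0 0 - C (c'⁻¹) * (w' 0 0 * C ((A0 : Matrix (Fin 2) (Fin 2) ℂ) 0 0)
          + w' 0 1 * C ((A0 : Matrix (Fin 2) (Fin 2) ℂ) 1 0)),
        w 0 1 - C (c'⁻¹) * (w' 0 0 * C ((A0 : Matrix (Fin 2) (Fin 2) ℂ) 0 1)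
          + w' 0 1 * C ((A0 : Matrix (Fin 2) (Fin 2) ℂ) 1 1))],
      ![w' 1 2 - C (c'⁻¹) * (C ((B0 : Matrix (Fin 2) (Fin 2) ℂ) 0 0) * w 1 2
          + C ((B0 : Matrix (Fin 2) (Fin 2) ℂ) 0 1) * w 2 2),
        w' 2 2 - C (c'⁻¹) * (C ((B0 : Matrix (Fin 2) (Fin 2) ℂ) 1 0) * w 1 2
          + C ((B0 : Matrix (Fin 2) (Fin 2) ℂ) 1 1) * w 2 2)],
      ?_, ?_, ?_⟩
    · intro i
      fin_cases i
      · exact hw.1.sub (isLin_CMul _ ((isLin_mulC _ hw'.1).add (isLin_mulC _ hw'.2.1)))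
      · exact hw.2.1.sub (isLin_CMul _ ((isLin_mulC _ hw'.1).add (isLin_mulC _ hw'.2.1)))
    · intro i
      fin_cases i
      · exact hw'.2.2.1.sub (isLin_CMul _ ((isLin_CMul _ hw.2.2.1).add (isLin_CMul _ hw.2.2.2.1)))
      · exact hw'.2.2.2.1.sub
          (isLin_CMul _ ((isLin_CMul _ hw.2.2.1).add (isLin_CMul _ hw.2.2.2.1)))
    · -- the orbit equation
      set Av : Matrix (Fin 2) (Fin 2) ℂ := (A0 : Matrix (Fin 2) (Fin 2) ℂ) with hAv
      set Bv : Matrix (Fin 2) (Fin 2) ℂ := (B0 : Matrix (Fin 2) (Fin 2) ℂ) with hBv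
      show w' = nu2 ((c * c'⁻¹) • Bv) c'
          (![w' 1 2 - C (c'⁻¹) * (C (Bv 0 0) * w 1 2 + C (Bv 0 1) * w 2 2),
             w' 2 2 - C (c'⁻¹) * (C (Bv 1 0) * w 1 2 + C (Bv 1 1) * w 2 2)]) * w *
          (nu1 Av c
            (![w 0 0 - C (c'⁻¹) * (w' 0 0 * C (Av 0 0) + w' 0 1 * C (Av 1 0)),
               w 0 1 - C (c'⁻¹) * (w' 0 0 * C (Av 0 1) + w' 0 1 * C (Av 1 1))]))⁻¹
      have hdet := det_nu1_isUnit Av c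
        (![w 0 0 - C (c'⁻¹) * (w' 0 0 * C (Av 0 0) + w' 0 1 * C (Av 1 0)),
           w 0 1 - C (c'⁻¹) * (w' 0 0 * C (Av 0 1) + w' 0 1 * C (Av 1 1))])
        hcne (gl_det_ne_zero A0)
      have hE : w' * nu1 Av c
          (![w 0 0 - C (c'⁻¹) * (w' 0 0 * C (Av 0 0) + w' 0 1 * C (Av 1 0)),
             w 0 1 - C (c'⁻¹) * (w' 0 0 * C (Av 0 1) + w' 0 1 * C (Av 1 1))])
          = nu2 ((c * c'⁻¹) • Bv) c'
          (![w' 1 2 - C (c'⁻¹) * (C (Bv 0 0) * w 1 2 + C (Bv 0 1) * w 2 2),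
             w' 2 2 - C (c'⁻¹) * (C (Bv 1 0) * w 1 2 + C (Bv 1 1) * w 2 2)]) * w := by
        rw [← Matrix.ext_iff]
        intro i j
        fin_cases i <;> fin_cases j
        · -- (0,0)
          simp [nu1, nu2, Matrix.mul_apply, Fin.sum_univ_three, Matrix.smul_apply,
            smul_eq_mul, _root_.map_mul, hc, hc']
          linear_combination (-(w' 0 0 * C (Av 0 0) + w' 0 1 * C (Av 1 0))) * honec
        · -- (0,1)
          simp [nu1, nu2, Matrix.mul_apply, Fin.sum_univ_three, Matrix.smul_apply,
            smul_eq_mul, _root_.map_mul, hc, hc']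
          linear_combination (-(w' 0 0 * C (Av 0 1) + w' 0 1 * C (Av 1 1))) * honec
        · -- (0,2)
          simp [nu1, nu2, Matrix.mul_apply, Fin.sum_univ_three, Matrix.smul_apply,
            smul_eq_mul, _root_.map_mul, hc, hc']
        · -- (1,0)
          simp [nu1, nu2, Matrix.mul_apply, Fin.sum_univ_three, Matrix.smul_apply,
            smul_eq_mul, _root_.map_mul, hc, hc']
          apply mul_left_cancel₀ hCc'
          linear_combination d00 + ((C (Bv 0 0) * w 1 2 + C (Bv 0 1) * w 2 2) * w 0 0
            - w' 1 2 * (w' 0 0 * C (Av 0 0) + w' 0 1 * C (Av 1 0))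
            - C c * (C (Bv 0 0) * w 1 0 + C (Bv 0 1) * w 2 0)) * honec
        · -- (1,1)
          simp [nu1, nu2, Matrix.mul_apply, Fin.sum_univ_three, Matrix.smul_apply,
            smul_eq_mul, _root_.map_mul, hc, hc']
          apply mul_left_cancel₀ hCc'
          linear_combination d01 + ((C (Bv 0 0) * w 1 2 + C (Bv 0 1) * w 2 2) * w 0 1
            - w' 1 2 * (w' 0 0 * C (Av 0 1) + w' 0 1 * C (Av 1 1))
            - C c * (C (Bv 0 0) * w 1 1 + C (Bv 0 1) * w 2 1)) * honec
        · -- (1,2)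
          simp [nu1, nu2, Matrix.mul_apply, Fin.sum_univ_three, Matrix.smul_apply,
            smul_eq_mul, _root_.map_mul, hc, hc']
          ring
        · -- (2,0)
          simp [nu1, nu2, Matrix.mul_apply, Fin.sum_univ_three, Matrix.smul_apply,
            smul_eq_mul, _root_.map_mul, hc, hc']
          apply mul_left_cancel₀ hCc'
          linear_combination d10 + ((C (Bv 1 0) * w 1 2 + C (Bv 1 1) * w 2 2) * w 0 0
            - w' 2 2 * (w' 0 0 * C (Av 0 0) + w' 0 1 * C (Av 1 0))
            - C c * (C (Bv 1 0) * w 1 0 + C (Bv 1 1) * w 2 0)) * honec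
        · -- (2,1)
          simp [nu1, nu2, Matrix.mul_apply, Fin.sum_univ_three, Matrix.smul_apply,
            smul_eq_mul, _root_.map_mul, hc, hc']
          apply mul_left_cancel₀ hCc'
          linear_combination d11 + ((C (Bv 1 0) * w 1 2 + C (Bv 1 1) * w 2 2) * w 0 1
            - w' 2 2 * (w' 0 0 * C (Av 0 1) + w' 0 1 * C (Av 1 1))
            - C c * (C (Bv 1 0) * w 1 1 + C (Bv 1 1) * w 2 1)) * honec
        · -- (2,2)
          simp [nu1, nu2, Matrix.mul_apply, Fin.sum_univ_three, Matrix.smul_apply,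
            smul_eq_mul, _root_.map_mul, hc, hc']
          ring
      rw [← hE, Matrix.mul_assoc, Matrix.mul_nonsing_inv _ hdet, Matrix.mul_one]
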